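/- Let d be odd, k = (d+1)/2, and n ≥ d+1. Let c_{n,d} be the number of k-tuples of integers 1 ≤ i_1 < i_2 < ⋯ < i_k ≤ n−1 such that for every j ∈ {1,…,k−1}: i_{j+1} − i_j ≥ 2, and either i_j is odd or i_{j+1} − i_j > 2. Then c_{n,d} equals the coefficient of X^n Y^k in the formal power series expansion at the origin of the rational function (1 + X + X³Y)/(1 − X² − X²Y − X⁴Y). -/

import Mathlib

noncomputable section

attribute [local instance] Classical.propDecidable

/-- Tuples `1 ≤ i 0 < i 1 < ⋯ < i (k-1) ≤ n - 1` such that consecutive entries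
differ by at least `2`, and each entry is odd or at distance more than `2`
from the next one. -/
def GoodTuple (k n : ℕ) (i : Fin k → Fin n) : Prop :=
  (∀ j, 1 ≤ (i j : ℕ)) ∧ StrictMono i ∧
  ∀ j l : Fin k, (j : ℕ) + 1 = (l : ℕ) →
    2 ≤ (i l : ℕ) - (i j : ℕ) ∧ (Odd (i j : ℕ) ∨ 2 < (i l : ℕ) - (i j : ℕ))

open MvPowerSeries Finsupp

def pr (a b : ℕ) : Fin 2 →₀ ℕ := Finsupp.single 0 a + Finsupp.single 1 b

lemma pr_apply0 (a b : ℕ) : pr a b 0 = a := by simp [pr, Finsupp.single_apply]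
lemma pr_apply1 (a b : ℕ) : pr a b 1 = b := by simp [pr, Finsupp.single_apply]

lemma pr_le (a b c d : ℕ) : pr a b ≤ pr c d ↔ a ≤ c ∧ b ≤ d := by
  rw [Finsupp.le_def]
  constructor
  · intro h
    exact ⟨by simpa [pr_apply0] using h 0, by simpa [pr_apply1] using h 1⟩
  · rintro ⟨h1, h2⟩ j
    fin_cases j
    · simpa [pr_apply0] using h1
    · simpa [pr_apply1] using h2

lemma pr_sub (a b c d : ℕ) : pr a b - pr c d = pr (a - c) (b - d) := by
  ext j
  rw [Finsupp.tsub_apply]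
  fin_cases j
  · simp [pr_apply0]
  · simp [pr_apply1]

lemma pr_eq (a b c d : ℕ) : pr a b = pr c d ↔ a = c ∧ b = d := by
  constructor
  · intro h
    exact ⟨by rw [← pr_apply0 a b, h, pr_apply0], by rw [← pr_apply1 a b, h, pr_apply1]⟩
  · rintro ⟨rfl, rfl⟩; rfl

lemma pr_eq_zero (a b : ℕ) : pr a b = 0 ↔ a = 0 ∧ b = 0 := by
  rw [show (0 : Fin 2 →₀ ℕ) = pr 0 0 by simp [pr], pr_eq]

lemma coeffG (X Y G : MvPowerSeries (Fin 2) ℚ)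
    (hX : X = MvPowerSeries.X 0) (hY : Y = MvPowerSeries.X 1)
    (hG : (1 - X ^ 2 - X ^ 2 * Y - X ^ 4 * Y) * G = 1 + X + X ^ 3 * Y) (n k : ℕ) :
    MvPowerSeries.coeff (pr n k) G =
      (if 2 ≤ n then MvPowerSeries.coeff (pr (n - 2) k) G else 0) +
      (if 2 ≤ n ∧ 1 ≤ k then MvPowerSeries.coeff (pr (n - 2) (k - 1)) G else 0) +
      (if 4 ≤ n ∧ 1 ≤ k then MvPowerSeries.coeff (pr (n - 4) (k - 1)) G else 0) +
      (if n = 0 ∧ k = 0 then 1 else 0) + (if n = 1 ∧ k = 0 then 1 else 0) +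
      (if n = 3 ∧ k = 1 then 1 else 0) := by
  have hm2 : X ^ 2 = MvPowerSeries.monomial (pr 2 0) 1 := by
    rw [hX, MvPowerSeries.X_pow_eq]
    congr 1
    simp [pr]
  have hm21 : X ^ 2 * Y = MvPowerSeries.monomial (pr 2 1) 1 := by
    rw [hX, hY, MvPowerSeries.X_pow_eq, MvPowerSeries.X,
      MvPowerSeries.monomial_mul_monomial, one_mul]
    rfl
  have hm41 : X ^ 4 * Y = MvPowerSeries.monomial (pr 4 1) 1 := by
    rw [hX, hY, MvPowerSeries.X_pow_eq, MvPowerSeries.X,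
      MvPowerSeries.monomial_mul_monomial, one_mul]
    rfl
  have hm1 : X = MvPowerSeries.monomial (pr 1 0) 1 := by
    rw [hX, ← pow_one (MvPowerSeries.X 0 : MvPowerSeries (Fin 2) ℚ), MvPowerSeries.X_pow_eq]
    congr 1
    simp [pr]
  have hm31 : X ^ 3 * Y = MvPowerSeries.monomial (pr 3 1) 1 := by
    rw [hX, hY, MvPowerSeries.X_pow_eq, MvPowerSeries.X,
      MvPowerSeries.monomial_mul_monomial, one_mul]
    rfl
  have h := congrArg (MvPowerSeries.coeff (pr n k)) hG
  rw [hm21, hm41, hm31, hm2, hm1, sub_mul, sub_mul, sub_mul, one_mul] at h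
  rw [map_sub, map_sub, map_sub, map_add, map_add] at h
  rw [MvPowerSeries.coeff_monomial_mul, MvPowerSeries.coeff_monomial_mul,
    MvPowerSeries.coeff_monomial_mul, MvPowerSeries.coeff_one,
    MvPowerSeries.coeff_monomial, MvPowerSeries.coeff_monomial] at h
  simp only [pr_le, pr_sub, pr_eq, pr_eq_zero, one_mul, Nat.zero_le, and_true, Nat.sub_zero] at h
  split_ifs at h ⊢ <;> first | (exfalso; omega) | linarith

def Ncnt (k n : ℕ) : ℕ :=
  ((Finset.univ : Finset (Fin k → Fin n)).filter (GoodTuple k n)).card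

lemma good_iff {k n : ℕ} (i : Fin k → Fin n) :
    GoodTuple k n i ↔ (∀ j, 1 ≤ (i j : ℕ)) ∧ StrictMono i ∧
      ∀ (j : ℕ) (h : j + 1 < k),
        (2 ≤ (i ⟨j+1, h⟩ : ℕ) - (i ⟨j, by omega⟩ : ℕ) ∧
        ((i ⟨j, by omega⟩ : ℕ) % 2 = 1 ∨ 2 < (i ⟨j+1, h⟩ : ℕ) - (i ⟨j, by omega⟩ : ℕ))) := by
  constructor
  · rintro ⟨h1, h2, h3⟩
    refine ⟨h1, h2, fun j h => ?_⟩
    have := h3 ⟨j, by omega⟩ ⟨j+1, h⟩ rfl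
    rwa [Nat.odd_iff] at this
  · rintro ⟨h1, h2, h3⟩
    refine ⟨h1, h2, fun j l hjl => ?_⟩
    rcases j with ⟨jv, hjv⟩
    rcases l with ⟨lv, hlv⟩
    simp only at hjl
    subst hjl
    have := h3 jv hlv
    rwa [Nat.odd_iff]

lemma Ncnt_zero (n : ℕ) : Ncnt 0 n = 1 := by
  rw [Ncnt, Finset.filter_true_of_mem]
  · simp
  · intro i _
    exact ⟨fun j => j.elim0, fun a => a.elim0, fun j => j.elim0⟩

lemma Ncnt_succ_zero (k : ℕ) : Ncnt (k+1) 0 = 0 := by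
  rw [Ncnt, Finset.card_eq_zero]
  exact Finset.eq_empty_of_forall_notMem fun i _ => (i 0).elim0

lemma Ncnt_succ_one (k : ℕ) : Ncnt (k+1) 1 = 0 := by
  rw [Ncnt, Finset.card_eq_zero]
  refine Finset.eq_empty_of_forall_notMem fun i hi => ?_
  rw [Finset.mem_filter] at hi
  have h1 := hi.2.1 0
  have h2 := (i 0).isLt
  omega

lemma cardA (k n : ℕ) :
    ((Finset.univ : Finset (Fin (k+1) → Fin (n+2))).filter (fun i =>
      GoodTuple (k+1) (n+2) i ∧ 3 ≤ (i 0 : ℕ))).card = Ncnt (k+1) n := by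
  symm
  rw [Ncnt]
  apply Finset.card_bij
    (fun i _ => fun j : Fin (k+1) => (⟨(i j : ℕ) + 2, by have := (i j).isLt; omega⟩ : Fin (n+2)))
  · intro i hi
    rw [Finset.mem_filter] at hi ⊢
    rw [good_iff] at hi
    obtain ⟨-, h1, h2, h3⟩ := hi
    refine ⟨Finset.mem_univ _, ?_, by simpa using h1 0⟩
    rw [good_iff]
    refine ⟨fun j => by simp, ?_, fun j h => ?_⟩
    · intro a b hab
      have := h2 hab
      rw [Fin.lt_def] at this ⊢
      simpa using this
    · have := h3 j h
      have g1 := h1 ⟨j, by omega⟩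
      simp only
      omega
  · intro a ha b hb hab
    funext j
    have := congrFun hab j
    simp only [Fin.mk.injEq] at this
    exact Fin.ext (by omega)
  · intro b hb
    rw [Finset.mem_filter] at hb
    obtain ⟨-, hbg, hb0⟩ := hb
    rw [good_iff] at hbg
    obtain ⟨h1, h2, h3⟩ := hbg
    have hge : ∀ j, 3 ≤ (b j : ℕ) := by
      intro j
      have := h2.monotone (Fin.zero_le j)
      rw [Fin.le_def] at this
      omega
    refine ⟨fun j => ⟨(b j : ℕ) - 2, by have := (b j).isLt; have := hge j; omega⟩,
      ?_, ?_⟩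
    · rw [Finset.mem_filter]
      refine ⟨Finset.mem_univ _, ?_⟩
      rw [good_iff]
      refine ⟨fun j => by have := hge j; simp; omega, ?_, fun j h => ?_⟩
      · intro a c hac
        have := h2 hac
        rw [Fin.lt_def] at this ⊢
        have := hge a
        simp only at *
        omega
      · have := h3 j h
        have g1 := hge ⟨j, by omega⟩
        have g2 := hge ⟨j+1, h⟩
        simp only
        omega
    · funext j
      apply Fin.ext
      have := hge j
      simp only
      omega

def pre (a s : ℕ) {k n : ℕ} (ha : a < n + s) (i : Fin k → Fin n) : Fin (k+1) → Fin (n+s) :=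
  fun j => if h0 : (j : ℕ) = 0 then ⟨a, ha⟩
    else ⟨(i ⟨(j:ℕ) - 1, by have := j.isLt; omega⟩ : ℕ) + s,
      by have := (i ⟨(j:ℕ) - 1, by have := j.isLt; omega⟩).isLt; omega⟩

lemma pre_val (a s : ℕ) {k n : ℕ} (ha : a < n + s) (i : Fin k → Fin n) (j : Fin (k+1)) :
    (pre a s ha i j : ℕ) =
      if h0 : (j : ℕ) = 0 then a
      else (i ⟨(j:ℕ) - 1, by have := j.isLt; omega⟩ : ℕ) + s := by
  rw [pre]
  split <;> rfl

lemma cardPre (a s : ℕ) (k n : ℕ) (ha : a < n + s) (has : 1 ≤ a) (hs : 2 ≤ s) (hs0 : s % 2 = 0)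
    (hgap : ∀ x : ℕ, 1 ≤ x → (2 ≤ x + s - a ∧ (a % 2 = 1 ∨ 2 < x + s - a)))
    (hrev : ∀ x : ℕ, x < n + s → (2 ≤ x - a ∧ (a % 2 = 1 ∨ 2 < x - a)) → s ≤ x ∧ 1 ≤ x - s) :
    ((Finset.univ : Finset (Fin (k+1) → Fin (n+s))).filter (fun i =>
      GoodTuple (k+1) (n+s) i ∧ (i 0 : ℕ) = a)).card = Ncnt k n := by
  obtain ⟨t, rfl⟩ : ∃ t, s = 2 * t := ⟨s / 2, by omega⟩
  symm
  rw [Ncnt]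
  apply Finset.card_bij (fun i _ => pre a (2*t) ha i)
  · intro i hi
    rw [Finset.mem_filter] at hi ⊢
    rw [good_iff] at hi
    obtain ⟨-, h1, h2, h3⟩ := hi
    refine ⟨Finset.mem_univ _, ?_, by rw [pre_val]; simp⟩
    rw [good_iff]
    refine ⟨fun j => ?_, ?_, fun j h => ?_⟩
    · rw [pre_val]
      split <;> omega
    · intro x y hxy
      rw [Fin.lt_def] at hxy ⊢
      have haux := hgap 1 le_rfl
      rw [pre_val, pre_val]
      split_ifs with hx0 hy0 hy0
      · omega
      · have g := h1 ⟨(y:ℕ)-1, by have := y.isLt; omega⟩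
        omega
      · omega
      · have := h2 (show (⟨(x:ℕ)-1, by have := x.isLt; omega⟩ : Fin k) <
            ⟨(y:ℕ)-1, by have := y.isLt; omega⟩ from by rw [Fin.mk_lt_mk]; omega)
        rw [Fin.lt_def] at this
        omega
    · rw [pre_val, pre_val]
      rcases Nat.eq_zero_or_pos j with hj0 | hj0
      · subst hj0
        rw [dif_pos rfl, dif_neg (by simp)]
        have g1 := h1 ⟨0, by omega⟩
        have hg := hgap (i ⟨0, by omega⟩ : ℕ) g1
        simp only [Nat.add_sub_cancel]
        omega
      · rw [dif_neg (by simp), dif_neg (by simpa using hj0.ne')]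
        obtain ⟨m, rfl⟩ : ∃ m, j = m + 1 := ⟨j - 1, by omega⟩
        have := h3 m (by omega)
        have g1 := h1 ⟨m, by omega⟩
        simp only [Nat.add_sub_cancel]
        omega
  · intro x hx y hy hxy
    funext j
    have := congrFun hxy j.succ
    have hv := congrArg Fin.val this
    rw [pre_val, pre_val] at hv
    rw [dif_neg (by simp), dif_neg (by simp)] at hv
    simp only [Fin.val_succ, Nat.add_sub_cancel, Fin.eta] at hv
    exact Fin.ext (by omega)
  · intro b hb
    rw [Finset.mem_filter] at hb
    obtain ⟨-, hbg, hb0⟩ := hb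
    rw [good_iff] at hbg
    obtain ⟨h1, h2, h3⟩ := hbg
    have hge : ∀ j : Fin k, 2*t ≤ (b j.succ : ℕ) ∧ 1 ≤ (b j.succ : ℕ) - 2*t := by
      intro j
      have hk1 : (0:ℕ) + 1 < k + 1 := by have := j.isLt; omega
      have hc := h3 0 hk1
      have hz : (⟨0, by omega⟩ : Fin (k+1)) = 0 := rfl
      rw [hz, hb0] at hc
      have hr := hrev (b ⟨1, hk1⟩ : ℕ) (b ⟨1, hk1⟩).isLt hc
      have hmono : (b ⟨1, hk1⟩ : ℕ) ≤ (b j.succ : ℕ) := by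
        have : (⟨1, hk1⟩ : Fin (k+1)) ≤ j.succ := by rw [Fin.le_def]; simp
        have := h2.monotone this
        rwa [Fin.le_def] at this
      omega
    refine ⟨fun j => ⟨(b j.succ : ℕ) - 2*t, by have := (b j.succ).isLt; have := (hge j).2; omega⟩,
      ?_, ?_⟩
    · rw [Finset.mem_filter]
      refine ⟨Finset.mem_univ _, ?_⟩
      rw [good_iff]
      refine ⟨fun j => by have := hge j; simp only; omega, ?_, fun j h => ?_⟩
      · intro x y hxy
        have hs2 : x.succ < y.succ := by rw [Fin.lt_def] at hxy ⊢; simpa using hxy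
        have := h2 hs2
        rw [Fin.lt_def] at this ⊢
        have := (hge x).2
        simp only at *
        omega
      · have hc := h3 (j+1) (by omega)
        have e1 : ((⟨j, by omega⟩ : Fin k).succ) = ⟨j+1, by omega⟩ := rfl
        have e2 : ((⟨j+1, h⟩ : Fin k).succ) = ⟨j+1+1, by omega⟩ := rfl
        have g1 := hge ⟨j, by omega⟩
        have g2 := hge ⟨j+1, h⟩
        rw [e1] at g1
        rw [e2] at g2
        simp only [e1, e2]
        omega
    · funext j
      apply Fin.ext
      rw [pre_val]
      split_ifs with hj0
      · have : j = 0 := Fin.ext hj0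
        rw [this, hb0]
      · have e1 : ((⟨(j:ℕ) - 1, by have := j.isLt; omega⟩ : Fin k).succ) = j :=
          Fin.ext (by simp [Fin.val_succ]; omega)
        have hg2 := (hge ⟨(j:ℕ) - 1, by have := j.isLt; omega⟩).2
        rw [e1] at hg2
        simp only
        rw [e1]
        omega

lemma cardB (k n : ℕ) :
    ((Finset.univ : Finset (Fin (k+1) → Fin (n+2))).filter (fun i =>
      GoodTuple (k+1) (n+2) i ∧ (i 0 : ℕ) = 1)).card = Ncnt k n :=
  cardPre 1 2 k n (by omega) le_rfl (by omega) (by omega)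
    (fun x hx => by omega) (fun x hx h => by omega)

lemma cardC (k n : ℕ) :
    ((Finset.univ : Finset (Fin (k+1) → Fin (n+4))).filter (fun i =>
      GoodTuple (k+1) (n+4) i ∧ (i 0 : ℕ) = 2)).card = Ncnt k n :=
  cardPre 2 4 k n (by omega) (by omega) (by omega) (by omega)
    (fun x hx => by omega) (fun x hx h => by omega)

lemma cardC0 (k : ℕ) :
    ((Finset.univ : Finset (Fin (k+1) → Fin 2)).filter (fun i =>
      GoodTuple (k+1) 2 i ∧ (i 0 : ℕ) = 2)).card = 0 := by
  rw [Finset.card_eq_zero]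
  refine Finset.eq_empty_of_forall_notMem fun i hi => ?_
  rw [Finset.mem_filter] at hi
  have := (i 0).isLt
  omega

lemma cardC1 :
    ((Finset.univ : Finset (Fin 1 → Fin 3)).filter (fun i =>
      GoodTuple 1 3 i ∧ (i 0 : ℕ) = 2)).card = 1 := by
  rw [Finset.card_eq_one]
  refine ⟨fun _ => ⟨2, by omega⟩, ?_⟩
  rw [Finset.eq_singleton_iff_unique_mem, Finset.mem_filter]
  constructor
  · refine ⟨Finset.mem_univ _, ⟨fun j => by simp, ?_, fun j l hjl => ?_⟩, rfl⟩
    · intro x y hxy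
      have hx := x.isLt
      have hy := y.isLt
      rw [Fin.lt_def] at hxy
      omega
    · have hj := j.isLt
      have hl := l.isLt
      omega
  · intro i hi
    rw [Finset.mem_filter] at hi
    funext j
    have hj : j = 0 := Subsingleton.elim _ _
    subst hj
    exact Fin.ext hi.2.2

lemma cardC1' (k : ℕ) :
    ((Finset.univ : Finset (Fin (k+2) → Fin 3)).filter (fun i =>
      GoodTuple (k+2) 3 i ∧ (i 0 : ℕ) = 2)).card = 0 := by
  rw [Finset.card_eq_zero]
  refine Finset.eq_empty_of_forall_notMem fun i hi => ?_
  rw [Finset.mem_filter] at hi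
  obtain ⟨-, ⟨h1, h2, h3⟩, h0⟩ := hi
  have hc := h3 0 1 rfl
  have := (i 1).isLt
  have hz : (i 0 : ℕ) = 2 := h0
  omega

lemma partition (k n : ℕ) :
    Ncnt (k+1) (n+2) =
      ((Finset.univ : Finset (Fin (k+1) → Fin (n+2))).filter (fun i =>
        GoodTuple (k+1) (n+2) i ∧ (i 0 : ℕ) = 1)).card +
      ((Finset.univ : Finset (Fin (k+1) → Fin (n+2))).filter (fun i =>
        GoodTuple (k+1) (n+2) i ∧ (i 0 : ℕ) = 2)).card +
      ((Finset.univ : Finset (Fin (k+1) → Fin (n+2))).filter (fun i =>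
        GoodTuple (k+1) (n+2) i ∧ 3 ≤ (i 0 : ℕ))).card := by
  rw [Ncnt]
  have e2 : (Finset.univ : Finset (Fin (k+1) → Fin (n+2))).filter
      (fun a => (GoodTuple (k+1) (n+2) a ∧ ¬ (a 0 : ℕ) = 1) ∧ (a 0 : ℕ) = 2) =
      (Finset.univ : Finset (Fin (k+1) → Fin (n+2))).filter
      (fun a => GoodTuple (k+1) (n+2) a ∧ (a 0 : ℕ) = 2) := by
    ext a
    simp only [Finset.mem_filter, Finset.mem_univ, true_and]
    constructor
    · rintro ⟨⟨h, -⟩, h2⟩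
      exact ⟨h, h2⟩
    · rintro ⟨h, h2⟩
      refine ⟨⟨h, ?_⟩, h2⟩
      omega
  have e3 : (Finset.univ : Finset (Fin (k+1) → Fin (n+2))).filter
      (fun a => (GoodTuple (k+1) (n+2) a ∧ ¬ (a 0 : ℕ) = 1) ∧ ¬ (a 0 : ℕ) = 2) =
      (Finset.univ : Finset (Fin (k+1) → Fin (n+2))).filter
      (fun a => GoodTuple (k+1) (n+2) a ∧ 3 ≤ (a 0 : ℕ)) := by
    ext a
    simp only [Finset.mem_filter, Finset.mem_univ, true_and]
    constructor
    · rintro ⟨⟨h, h1⟩, h2⟩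
      refine ⟨h, ?_⟩
      have := h.1 0
      omega
    · rintro ⟨h, h3⟩
      refine ⟨⟨h, ?_⟩, ?_⟩ <;> omega
  have t1 := Finset.card_filter_add_card_filter_not
    (s := (Finset.univ : Finset (Fin (k+1) → Fin (n+2))).filter (GoodTuple (k+1) (n+2)))
    (p := fun i => (i 0 : ℕ) = 1)
  have t2 := Finset.card_filter_add_card_filter_not
    (s := ((Finset.univ : Finset (Fin (k+1) → Fin (n+2))).filter (GoodTuple (k+1) (n+2))).filter
      (fun i => ¬ (i 0 : ℕ) = 1))
    (p := fun i => (i 0 : ℕ) = 2)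
  simp only [Finset.filter_filter] at t1 t2
  rw [e2, e3] at t2
  rw [← t1, ← t2]
  exact (add_assoc _ _ _).symm

lemma recN (k n : ℕ) :
    Ncnt (k+1) (n+4) = Ncnt k (n+2) + Ncnt k n + Ncnt (k+1) (n+2) := by
  have := partition k (n+2)
  rw [cardB k (n+2), cardA k (n+2)] at this
  have hC := cardC k n
  rw [show n + 2 + 2 = n + 4 from rfl] at this
  rw [hC] at this
  exact this

lemma recN2 (k : ℕ) : Ncnt (k+1) 2 = Ncnt k 0 + Ncnt (k+1) 0 := by
  have := partition k 0
  rw [cardB k 0, cardA k 0, cardC0 k] at this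
  simpa using this

lemma recN3_0 : Ncnt 1 3 = Ncnt 0 1 + 1 + Ncnt 1 1 := by
  have := partition 0 1
  rw [cardB 0 1, cardA 0 1, cardC1] at this
  simpa using this

lemma recN3_s (k : ℕ) : Ncnt (k+2) 3 = Ncnt (k+1) 1 + Ncnt (k+2) 1 := by
  have := partition (k+1) 1
  rw [cardB (k+1) 1, cardA (k+1) 1, cardC1' k] at this
  simpa using this

lemma main (X Y G : MvPowerSeries (Fin 2) ℚ)
    (hX : X = MvPowerSeries.X 0) (hY : Y = MvPowerSeries.X 1)
    (hG : (1 - X ^ 2 - X ^ 2 * Y - X ^ 4 * Y) * G = 1 + X + X ^ 3 * Y) (n : ℕ) :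
    ∀ k : ℕ, (Ncnt k n : ℚ) = MvPowerSeries.coeff (pr n k) G := by
  induction n using Nat.strong_induction_on with
  | _ n ih =>
    intro k
    rw [coeffG X Y G hX hY hG n k]
    obtain rfl | rfl | rfl | rfl | h4 : n = 0 ∨ n = 1 ∨ n = 2 ∨ n = 3 ∨ 4 ≤ n := by omega
    · -- n = 0
      rw [if_neg (show ¬(2:ℕ) ≤ 0 by omega),
        if_neg (show ¬((2:ℕ) ≤ 0 ∧ 1 ≤ k) by omega),
        if_neg (show ¬((4:ℕ) ≤ 0 ∧ 1 ≤ k) by omega),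
        if_neg (show ¬((0:ℕ) = 1 ∧ k = 0) by omega),
        if_neg (show ¬((0:ℕ) = 3 ∧ k = 1) by omega)]
      rcases k with _ | k
      · rw [if_pos (show (0:ℕ) = 0 ∧ (0:ℕ) = 0 from ⟨rfl, rfl⟩), Ncnt_zero]
        norm_num
      · rw [if_neg (show ¬((0:ℕ) = 0 ∧ k + 1 = 0) by omega), Ncnt_succ_zero]
        norm_num
    · -- n = 1
      rw [if_neg (show ¬(2:ℕ) ≤ 1 by omega),
        if_neg (show ¬((2:ℕ) ≤ 1 ∧ 1 ≤ k) by omega),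
        if_neg (show ¬((4:ℕ) ≤ 1 ∧ 1 ≤ k) by omega),
        if_neg (show ¬((1:ℕ) = 0 ∧ k = 0) by omega),
        if_neg (show ¬((1:ℕ) = 3 ∧ k = 1) by omega)]
      rcases k with _ | k
      · rw [if_pos (show (1:ℕ) = 1 ∧ (0:ℕ) = 0 from ⟨rfl, rfl⟩), Ncnt_zero]
        norm_num
      · rw [if_neg (show ¬((1:ℕ) = 1 ∧ k + 1 = 0) by omega), Ncnt_succ_one]
        norm_num
    · -- n = 2
      rw [if_pos (show (2:ℕ) ≤ 2 from le_rfl),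
        if_neg (show ¬((4:ℕ) ≤ 2 ∧ 1 ≤ k) by omega),
        if_neg (show ¬((2:ℕ) = 0 ∧ k = 0) by omega),
        if_neg (show ¬((2:ℕ) = 1 ∧ k = 0) by omega),
        if_neg (show ¬((2:ℕ) = 3 ∧ k = 1) by omega),
        show (2:ℕ) - 2 = 0 from rfl]
      rcases k with _ | k
      · rw [if_neg (show ¬((2:ℕ) ≤ 2 ∧ (1:ℕ) ≤ 0) by omega),
          Ncnt_zero, ← ih 0 (by omega) 0, Ncnt_zero]
        norm_num
      · rw [if_pos (show (2:ℕ) ≤ 2 ∧ 1 ≤ k + 1 by omega),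
          show k + 1 - 1 = k from rfl, recN2 k,
          ← ih 0 (by omega) (k+1), ← ih 0 (by omega) k]
        push_cast
        ring
    · -- n = 3
      rw [if_pos (show (2:ℕ) ≤ 3 by omega),
        if_neg (show ¬((3:ℕ) = 0 ∧ k = 0) by omega),
        if_neg (show ¬((3:ℕ) = 1 ∧ k = 0) by omega),
        show (3:ℕ) - 2 = 1 from rfl]
      rcases k with _ | k
      · rw [if_neg (show ¬((2:ℕ) ≤ 3 ∧ (1:ℕ) ≤ 0) by omega),
          if_neg (show ¬((4:ℕ) ≤ 3 ∧ (1:ℕ) ≤ 0) by omega),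
          if_neg (show ¬((3:ℕ) = 3 ∧ (0:ℕ) = 1) by omega),
          Ncnt_zero, ← ih 1 (by omega) 0, Ncnt_zero]
        norm_num
      · rcases k with _ | k
        · rw [if_pos (show (2:ℕ) ≤ 3 ∧ (1:ℕ) ≤ 1 by omega),
            if_neg (show ¬((4:ℕ) ≤ 3 ∧ (1:ℕ) ≤ 1) by omega),
            if_pos (show (3:ℕ) = 3 ∧ (1:ℕ) = 1 from ⟨rfl, rfl⟩),
            show (1:ℕ) - 1 = 0 from rfl, recN3_0,
            ← ih 1 (by omega) 1, ← ih 1 (by omega) 0]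
          push_cast
          ring
        · rw [if_pos (show (2:ℕ) ≤ 3 ∧ 1 ≤ k + 2 by omega),
            if_neg (show ¬((4:ℕ) ≤ 3 ∧ 1 ≤ k + 2) by omega),
            if_neg (show ¬((3:ℕ) = 3 ∧ k + 2 = 1) by omega),
            show k + 2 - 1 = k + 1 from rfl,
            recN3_s k, ← ih 1 (by omega) (k+2), ← ih 1 (by omega) (k+1)]
          push_cast
          ring
    · -- n ≥ 4
      obtain ⟨m, rfl⟩ : ∃ m, n = m + 4 := ⟨n - 4, by omega⟩
      rw [if_pos (show (2:ℕ) ≤ m + 4 by omega),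
        if_neg (show ¬(m + 4 = 0 ∧ k = 0) by omega),
        if_neg (show ¬(m + 4 = 1 ∧ k = 0) by omega),
        if_neg (show ¬(m + 4 = 3 ∧ k = 1) by omega),
        show m + 4 - 2 = m + 2 from rfl, show m + 4 - 4 = m from rfl]
      rcases k with _ | k
      · rw [if_neg (show ¬((2:ℕ) ≤ m + 4 ∧ (1:ℕ) ≤ 0) by omega),
          if_neg (show ¬((4:ℕ) ≤ m + 4 ∧ (1:ℕ) ≤ 0) by omega),
          Ncnt_zero, ← ih (m+2) (by omega) 0, Ncnt_zero]
        norm_num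
      · rw [if_pos (show (2:ℕ) ≤ m + 4 ∧ 1 ≤ k + 1 by omega),
          if_pos (show (4:ℕ) ≤ m + 4 ∧ 1 ≤ k + 1 by omega),
          show k + 1 - 1 = k from rfl, recN k m,
          ← ih (m+2) (by omega) (k+1), ← ih (m+2) (by omega) k, ← ih m (by omega) k]
        push_cast
        ring

theorem stmt17 (d : ℕ) (hodd : Odd d) (k : ℕ) (hk : k = (d + 1) / 2)
    (n : ℕ) (hn : d + 1 ≤ n)
    (c : ℕ)
    (hc : c = ((Finset.univ : Finset (Fin k → Fin n)).filter (GoodTuple k n)).card)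
    (X Y : MvPowerSeries (Fin 2) ℚ) (hX : X = MvPowerSeries.X 0) (hY : Y = MvPowerSeries.X 1)
    (G : MvPowerSeries (Fin 2) ℚ)
    (hG : (1 - X ^ 2 - X ^ 2 * Y - X ^ 4 * Y) * G = 1 + X + X ^ 3 * Y) :
    (c : ℚ) = MvPowerSeries.coeff (Finsupp.single 0 n + Finsupp.single 1 k) G := by
  have h := main X Y G hX hY hG n k
  rw [hc]
  exact h
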